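/- Identity diagrams are compatible with whiskering: for a well-defined n-diagram D and well-defined m-diagram S with m, n > 0, if S = s^{n−m+1}(D) then S ∘ id(D) = id(S ∘ D), and if t^{m−n+1}(S) = D then id(S) ∘ D = id(S ∘ D). -/

import Mathlib

/-!
Data structures for quasistrict higher categories (Bar–Vicary).
A 0-diagram is a single generator; an (n+1)-diagram is a source n-diagram
together with a list of cells, each a generator name with embedding data.
Embedding data between n-diagrams is a list of n heights; composition of
embeddings adds heights at every level, and the lifted embedding `Λ(e,T)`
has the same data as `e`.
-/

namespace QS

inductive Diagram : Type where
  | base (g : ℕ) : Diagram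
  | step (s : Diagram) (c : List (ℕ × List ℕ)) : Diagram

namespace Diagram

/-- Dimension of a diagram. -/
def dim : Diagram → ℕ
  | base _ => 0
  | step s _ => s.dim + 1

/-- The source (n−1)-diagram of an n-diagram (junk at dimension 0). -/
def src : Diagram → Diagram
  | base g => base g
  | step s _ => s

/-- The list of cells: generator names with embedding data. -/
def cells : Diagram → List (ℕ × List ℕ)
  | base _ => []
  | step _ c => c

/-- The length `|D|` of a diagram. -/
def size : Diagram → ℕ
  | base _ => 1
  | step _ c => c.length

/-- The unique generator of a 0-diagram. -/
def gen : Diagram → ℕ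
  | base g => g
  | step _ _ => 0

end Diagram

/-- A signature assigns to each generator name of each dimension `k ≥ 1` a
source and a target (k−1)-diagram. -/
structure Signature where
  gsrc : ℕ → ℕ → Diagram
  gtgt : ℕ → ℕ → Diagram

/-- Data of the composite embedding `f ∘ e`: `(f ∘ e).h = e.h + f.h`
recursively at every level, i.e. pointwise addition of height data. -/
def embComp (f e : List ℕ) : List ℕ := List.zipWith (· + ·) f e

/-- Data of the lifted embedding `Λ(e, T) : T ↪ D⟨e : S → T⟩`: the same
height data as `e` (`Λ(e,T).h = e.h`, `Λ(e,T).e = e.e`). -/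
def liftEmb (e : List ℕ) (_T : Diagram) : List ℕ := e

/-- Data of the identity embedding on an n-diagram: height 0 at every level. -/
def idEmb (n : ℕ) : List ℕ := List.replicate n 0

/-- The rewrite `D⟨e : S → T⟩`: remove the copy of `S` embedded at height
`e.h` and insert `T`, with the embeddings of `T` composed with the lift of
`e.e`. -/
def rewriteDiag (D : Diagram) (e : List ℕ) (S T : Diagram) : Diagram :=
  match D with
  | .base _ => T
  | .step s c =>
      .step s (c.take (e.headD 0)
        ++ T.cells.map (fun x => (x.1, embComp (liftEmb e.tail T) x.2))
        ++ c.drop (e.headD 0 + S.cells.length))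

/-- The slice `D[i].d`, obtained by sequential rewriting from the source. -/
def slice (σ : Signature) (D : Diagram) : ℕ → Diagram
  | 0 => D.src
  | i + 1 =>
      rewriteDiag (slice σ D i) (D.cells.getD i default).2
        (σ.gsrc D.dim (D.cells.getD i default).1)
        (σ.gtgt D.dim (D.cells.getD i default).1)

/-- The target `D.t := D[|D|].d`. -/
def tgt (σ : Signature) (D : Diagram) : Diagram := slice σ D D.cells.length

/-- Iterated source `s^k`. -/
def srcIter : ℕ → Diagram → Diagram
  | 0, D => D
  | k + 1, D => srcIter k D.src

/-- Iterated target `t^k`. -/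
def tgtIter (σ : Signature) : ℕ → Diagram → Diagram
  | 0, D => D
  | k + 1, D => tgtIter σ k (tgt σ D)

/-- Well-definedness of an embedding `e : S ↪ D`: for 0-diagrams the unique
generators agree; otherwise the component embedding is well-defined, the
image is in range, and the generators and embeddings of `S` match those of
`D` at heights shifted by `e.h` (via the lift of `e.e`). -/
def wdEmb (σ : Signature) : List ℕ → Diagram → Diagram → Prop
  | e, .base g, D => e = [] ∧ D.gen = g
  | e, .step Ss Sc, D =>
      e.length = Ss.dim + 1 ∧
      e.headD 0 + Sc.length ≤ D.cells.length ∧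
      wdEmb σ e.tail Ss (slice σ D (e.headD 0)) ∧
      ∀ i < Sc.length,
        (Sc.getD i default).1 = (D.cells.getD (i + e.headD 0) default).1 ∧
        embComp e.tail (Sc.getD i default).2
          = (D.cells.getD (i + e.headD 0) default).2

/-- Auxiliary well-definedness predicate for diagrams, by dimension. -/
def wdAux (σ : Signature) : ℕ → Diagram → Prop
  | 0, _ => True
  | n + 1, D =>
      wdAux σ n D.src ∧
      ∀ i < D.cells.length,
        wdEmb σ (D.cells.getD i default).2
          (σ.gsrc (n + 1) (D.cells.getD i default).1) (slice σ D i) ∧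
        wdAux σ n (slice σ D (i + 1))

/-- Well-definedness of a diagram: the source is well-defined and every
slice exists and is well-defined. -/
def wdDiagram (σ : Signature) (D : Diagram) : Prop := wdAux σ D.dim D

/-- Two n-diagrams are globular when n = 0, or they have equal sources and
equal targets. -/
def globular (σ : Signature) (S T : Diagram) : Prop :=
  match S with
  | .base _ => True
  | .step _ _ => S.src = T.src ∧ tgt σ S = tgt σ T

/-- Vertical composite of two n-diagrams (`S` below `D`): the source of `S`
together with the concatenated cell lists. -/
def vcomp (S D : Diagram) : Diagram :=
  match S with
  | .base g => .base g
  | .step s c => .step s (c ++ D.cells)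

/-- Data of the inclusion embedding `inc(S, D) : D ↪ S ∘ D` of an n-diagram
`D` into its composite with an m-diagram `S` of size `sLen`, `m ≤ n`. -/
def incData (m sLen : ℕ) : ℕ → List ℕ
  | 0 => []
  | k + 1 => if m = k + 1 then sLen :: List.replicate k 0
             else 0 :: incData m sLen k

/-- Composite `S ∘ D` where `S` has dimension ≤ that of `D`: `S` is attached
on the source side of the shared boundary, so the embeddings of the cells of
`D` are composed with the inclusion embeddings. -/
def compL (S D : Diagram) : Diagram :=
  match D with
  | .base g => .base g
  | .step s c =>
      if S.dim = s.dim + 1 then vcomp S D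
      else .step (compL S s)
        (c.map fun x => (x.1, embComp (incData S.dim S.size s.dim) x.2))

/-- Composite `D ∘ X` where `X` has dimension ≤ that of `D`: `X` is attached
on the target side of the shared boundary, so the cell data of `D` is
unchanged and only the deep source changes. -/
def compR (D X : Diagram) : Diagram :=
  match D with
  | .base g => .base g
  | .step s c =>
      if X.dim = s.dim + 1 then vcomp D X
      else .step (compR s X) c

/-- The composite `X ∘ Y` of two diagrams along their unique common
boundary, determined by their dimensions. -/
def comp (X Y : Diagram) : Diagram :=
  if X.dim ≤ Y.dim then compL X Y else compR X Y

/-- The identity (n+1)-diagram on an n-diagram: source `D`, no cells. -/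
def idDiag (D : Diagram) : Diagram := .step D []

/-- Composability of `X ∘ Y`: the matching condition on iterated
sources/targets along the shared boundary. -/
def composable (σ : Signature) (X Y : Diagram) : Prop :=
  if X.dim ≤ Y.dim then tgt σ X = srcIter (Y.dim - X.dim + 1) Y
  else tgtIter σ (X.dim - Y.dim + 1) X = Y.src

lemma compL_step (S s : Diagram) (c : List (ℕ × List ℕ)) :
    compL S (.step s c) = if S.dim = s.dim + 1 then vcomp S (.step s c)
      else .step (compL S s)
        (c.map fun x => (x.1, embComp (incData S.dim S.size s.dim) x.2)) := rfl

lemma compR_step (s : Diagram) (c : List (ℕ × List ℕ)) (X : Diagram) :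
    compR (.step s c) X = if X.dim = s.dim + 1 then vcomp (.step s c) X
      else .step (compR s X) c := rfl

/-- **Identity diagrams are compatible with whiskering.**  For a well-defined
n-diagram `D` and well-defined m-diagram `S` with `m, n > 0`: if `m ≤ n` and
the composability condition `S.t = s^{n−m+1}(D)` holds then
`S ∘ id(D) = id(S ∘ D)`; and if `n ≤ m` and `t^{m−n+1}(S) = D.s` then
`id(S) ∘ D = id(S ∘ D)`. -/
theorem idDiag_comp (σ : Signature) (D S : Diagram)
    (hm : 0 < S.dim) (hn : 0 < D.dim)
    (hD : wdDiagram σ D) (hS : wdDiagram σ S) :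
    (S.dim ≤ D.dim → tgt σ S = srcIter (D.dim - S.dim + 1) D →
      comp S (idDiag D) = idDiag (comp S D)) ∧
    (D.dim ≤ S.dim → tgtIter σ (S.dim - D.dim + 1) S = D.src →
      comp (idDiag S) D = idDiag (comp S D)) := by
  constructor
  · intro hle _
    cases D with
    | base g => simp [Diagram.dim] at hn
    | step s c =>
      have h1 : S.dim ≤ s.dim + 1 := hle
      show comp S (idDiag (Diagram.step s c)) = idDiag (comp S (Diagram.step s c))
      simp only [comp, idDiag, Diagram.dim]
      rw [if_pos (by omega : S.dim ≤ s.dim + 1 + 1)]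
      simp only [h1, ↓reduceIte]
      rw [compL_step]
      rw [if_neg (by simp only [Diagram.dim]; omega)]
      rfl
  · intro hle _
    cases S with
    | base g => simp [Diagram.dim] at hm
    | step Ss Sc =>
      have h1 : D.dim ≤ Ss.dim + 1 := hle
      show comp (idDiag (Diagram.step Ss Sc)) D = idDiag (comp (Diagram.step Ss Sc) D)
      simp only [comp, idDiag, Diagram.dim]
      rw [if_neg (by omega : ¬ Ss.dim + 1 + 1 ≤ D.dim), compR_step,
        if_neg (by simp only [Diagram.dim]; omega : ¬ D.dim = (Diagram.step Ss Sc).dim + 1)]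
      by_cases heq : Ss.dim + 1 = D.dim
      · simp only [le_of_eq heq, ↓reduceIte]
        cases D with
        | base g => simp [Diagram.dim] at hn
        | step Ds Dc =>
          have hDs : Ds.dim = Ss.dim := by
            have := heq; simp only [Diagram.dim] at this; omega
          rw [compL_step, if_pos (by simp only [Diagram.dim]; omega), compR_step,
            if_pos (by simp only [Diagram.dim]; omega)]
      · simp only [show (Ss.dim + 1 ≤ D.dim) = False from eq_false (by omega), ↓reduceIte]

end QS
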